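/- Let n ≥ 1 and d, d₁ be integers with 1 ≤ d₁ < d; set a = n(d − d₁) and m = n(2d − d₁). For tuples (h, g) as follows — integers h_j with a ≤ h_j ≤ a + j − 1 for j ∈ {1,…,a−1}, and integers g_j with a + n⌊(j−a)/n⌋ ≤ g_j ≤ a + n⌊(j−a)/n⌋ + n − 1 for j ∈ {a,…,nd−1} — let Λ(h, g) be the multiset consisting of the one-point interval [a, a], the intervals [a − j, h_j] and [h_j + 1, a + j] for j = 1,…,a−1, and the intervals [0, g_j] and [g_j + 1, a + j] for j = a,…,nd−1. Then the map (h, g) ↦ Λ(h, g) is injective, and consequently the number of admissible proper systems with parameters m = n(2d − d₁) and σ(i) = min(n d₁ + i, m − i), consisting of exactly 2nd − 1 intervals, is at least (a − 1)! · n^{n d₁}. -/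

import Mathlib

/-- `IsProperSystem m σ S` : `S` is a *proper system* with parameters `(m, σ)`, i.e. a finite
multiset of closed intervals `[a,b]` with integer endpoints (encoded as pairs `(a,b)` of
integers, one-point intervals `a = b` allowed) contained in `[0,m]`, such that for every
integer `i ∈ [0,m]` the number of intervals of `S` containing `i`, counted with multiplicity,
equals `σ i`. -/
def IsProperSystem (m : ℤ) (σ : ℤ → ℕ) (S : Multiset (ℤ × ℤ)) : Prop :=
  (∀ I ∈ S, 0 ≤ I.1 ∧ I.1 ≤ I.2 ∧ I.2 ≤ m) ∧
  ∀ i : ℤ, 0 ≤ i → i ≤ m →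
    (S.filter fun I => I.1 ≤ i ∧ i ≤ I.2).card = σ i

/-- The *graph* of a system of intervals in `[0,m]` enumerated (with multiplicity) by
`f : Fin t → ℤ × ℤ` : its vertices are the `t` intervals (`Sum.inl j` is the `j`-th interval)
together with `m` additional vertices `w_0, …, w_{m-1}` (`Sum.inr i` is `w_i`), and `w_i` is
adjacent exactly to the intervals whose right endpoint is `i` and to the intervals whose
left endpoint is `i + 1`. -/
def systemGraph (m : ℕ) {t : ℕ} (f : Fin t → ℤ × ℤ) : SimpleGraph (Fin t ⊕ Fin m) :=
  SimpleGraph.fromRel fun u v =>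
    match u, v with
    | Sum.inl j, Sum.inr i => (f j).2 = (i : ℤ) ∨ (f j).1 = (i : ℤ) + 1
    | _, _ => False

/-- A multiset of intervals in `[0,m]` is *admissible* if its graph is a tree.  (The graph is
independent, up to isomorphism, of the chosen enumeration of the multiset.) -/
def IsAdmissible (m : ℕ) (S : Multiset (ℤ × ℤ)) : Prop :=
  ∃ (t : ℕ) (f : Fin t → ℤ × ℤ), (List.ofFn f : Multiset (ℤ × ℤ)) = S ∧
    (systemGraph m f).IsTree

/-- `IsMarkedSystem m σ t M` : `M` is a *marked admissible proper system* with parameters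
`(m, σ)` consisting of exactly `t` intervals: a finite multiset of pairs `(I, p)` where `p`
is an integer point of the interval `I`, whose multiset of first components is an admissible
proper system with parameters `(m, σ)` consisting of `t` intervals. -/
def IsMarkedSystem (m : ℕ) (σ : ℤ → ℕ) (t : ℕ) (M : Multiset ((ℤ × ℤ) × ℤ)) : Prop :=
  (∀ p ∈ M, p.1.1 ≤ p.2 ∧ p.2 ≤ p.1.2) ∧
  IsProperSystem m σ (M.map Prod.fst) ∧
  IsAdmissible m (M.map Prod.fst) ∧
  M.card = t

/-- The multiset `Λ(h, g)` consisting of the one-point interval `[a, a]`, the intervals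
`[a - j, h j]` and `[h j + 1, a + j]` for `j = 1, …, a - 1`, and the intervals `[0, g j]`
and `[g j + 1, a + j]` for `j = a, …, N - 1`. -/
def pentagonSystem (a N : ℕ) (h g : ℕ → ℤ) : Multiset (ℤ × ℤ) :=
  ((a : ℤ), (a : ℤ)) ::ₘ
    (((Finset.Icc 1 (a - 1)).val.bind fun j =>
        {((a : ℤ) - j, h j), (h j + 1, (a : ℤ) + j)}) +
      ((Finset.Icc a (N - 1)).val.bind fun j =>
        {((0 : ℤ), g j), (g j + 1, (a : ℤ) + j)}))

namespace Stmt8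

/-- left endpoints -/
def lfun (a j : ℕ) : ℤ := if j < a then (a : ℤ) - j else 0

/-- the list of intervals -/
def sysList (a N : ℕ) (e : ℕ → ℤ) : List (ℤ × ℤ) :=
  ((a : ℤ), (a : ℤ)) :: (List.range (N - 1)).flatMap fun i =>
    [(lfun a (i + 1), e (i + 1)), (e (i + 1) + 1, (a : ℤ) + ((i + 1 : ℕ) : ℤ))]

lemma length_flatMap_pairs {α : Type*} (A B : ℕ → α) (M : ℕ) :
    ((List.range M).flatMap fun i => [A i, B i]).length = 2 * M := by
  induction M with
  | zero => simp
  | succ M ih =>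
    rw [List.range_succ, List.flatMap_append, List.length_append, ih]
    simp; omega

lemma length_sysList' (a N : ℕ) (e : ℕ → ℤ) (hN : 1 ≤ N) :
    (sysList a N e).length = 2 * N - 1 := by
  rw [sysList, List.length_cons, length_flatMap_pairs]; omega

lemma getElem_flatMap_pairs {α : Type*} (A B : ℕ → α) (M : ℕ) :
    ∀ (k : ℕ) (hk : k < ((List.range M).flatMap fun i => [A i, B i]).length),
      ((List.range M).flatMap fun i => [A i, B i])[k] =
        if k % 2 = 0 then A (k / 2) else B (k / 2) := by
  induction M with
  | zero => intro k hk; simp at hk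
  | succ M ih =>
    intro k hk0
    have hk : k < (((List.range M).flatMap fun i => [A i, B i])
        ++ [M].flatMap fun i => [A i, B i]).length := by
      rw [← List.flatMap_append, ← List.range_succ]; exact hk0
    rw [List.getElem_of_eq (by rw [List.range_succ, List.flatMap_append]) hk0,
      List.getElem_append]
    split
    · next h' =>
      rw [length_flatMap_pairs] at h'
      exact ih k (by rwa [length_flatMap_pairs])
    · next h' =>
      rw [length_flatMap_pairs] at h'
      have hk2 : k < 2 * M + 2 := by
        have h5 := hk
        rw [List.length_append, length_flatMap_pairs] at h5
        simpa using h5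
      simp only [List.flatMap_cons, List.flatMap_nil, List.append_nil,
        length_flatMap_pairs]
      rcases (by omega : k = 2 * M ∨ k = 2 * M + 1) with rfl | rfl
      · have : (2 * M) % 2 = 0 := by omega
        rw [if_pos this]
        have h2 : 2 * M / 2 = M := by omega
        rw [h2]
        simp [Nat.sub_self]
      · have : (2 * M + 1) % 2 ≠ 0 := by omega
        rw [if_neg this]
        have h2 : (2 * M + 1) / 2 = M := by omega
        rw [h2]
        have h3 : 2 * M + 1 - 2 * M = 1 := by omega
        simp [h3]

lemma get_sysList (a N : ℕ) (e : ℕ → ℤ) (k : ℕ) (hk : k < (sysList a N e).length) :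
    (sysList a N e).get ⟨k, hk⟩ =
      if k = 0 then ((a : ℤ), (a : ℤ))
      else if k % 2 = 1 then (lfun a ((k + 1) / 2), e ((k + 1) / 2))
      else (e (k / 2) + 1, (a : ℤ) + ((k / 2 : ℕ) : ℤ)) := by
  rcases k with _ | k'
  · rfl
  · rw [if_neg (by omega)]
    have hk' : k' < ((List.range (N-1)).flatMap fun i =>
        [(lfun a (i + 1), e (i + 1)), (e (i + 1) + 1, (a : ℤ) + ((i + 1 : ℕ) : ℤ))]).length := by
      have := hk; rw [sysList, List.length_cons] at this; omega
    have : (sysList a N e).get ⟨k' + 1, hk⟩ =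
        ((List.range (N-1)).flatMap fun i =>
        [(lfun a (i + 1), e (i + 1)), (e (i + 1) + 1, (a : ℤ) + ((i + 1 : ℕ) : ℤ))])[k'] := by
      rfl
    rw [this, getElem_flatMap_pairs]
    rcases Nat.even_or_odd k' with ⟨c, rfl⟩ | ⟨c, rfl⟩
    · have h1 : (c + c) % 2 = 0 := by omega
      have h2 : (c + c + 1) % 2 = 1 := by omega
      rw [if_pos h1, if_pos h2]
      have h3 : (c + c) / 2 = c := by omega
      have h4 : (c + c + 1 + 1) / 2 = c + 1 := by omega
      rw [h3, h4]
    · have h1 : (2 * c + 1) % 2 ≠ 0 := by omega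
      have h2 : (2 * c + 1 + 1) % 2 ≠ 1 := by omega
      rw [if_neg h1, if_neg h2]
      have h3 : (2 * c + 1) / 2 = c := by omega
      have h4 : (2 * c + 1 + 1) / 2 = c + 1 := by omega
      rw [h3, h4]



lemma coe_sysList (a N : ℕ) (e : ℕ → ℤ) :
    (↑(sysList a N e) : Multiset (ℤ × ℤ)) =
      ((a : ℤ), (a : ℤ)) ::ₘ (Multiset.range (N - 1)).bind
        (fun i => {(lfun a (i + 1), e (i + 1)),
          (e (i + 1) + 1, (a : ℤ) + ((i + 1 : ℕ) : ℤ))}) := by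
  rw [sysList, ← Multiset.cons_coe]
  congr 1
  rw [← Multiset.coe_bind]
  rfl

lemma range_bind_succ_eq_Icc {β : Type*} (M : ℕ) (F : ℕ → Multiset β) :
    (Multiset.range M).bind (fun i => F (i + 1)) = (Finset.Icc 1 M).val.bind F := by
  induction M with
  | zero => simp
  | succ M ih =>
    rw [Multiset.range_succ, Multiset.cons_bind, ih]
    have h1 : Finset.Icc 1 (M + 1) = insert (M + 1) (Finset.Icc 1 M) := by
      ext x; simp only [Finset.mem_Icc, Finset.mem_insert]; omega
    rw [h1, Finset.insert_val_of_notMem (by simp), Multiset.cons_bind]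

lemma Icc_val_split (a K : ℕ) (ha : 1 ≤ a) (haK : a ≤ K + 1) :
    (Finset.Icc 1 K).val = (Finset.Icc 1 (a - 1)).val + (Finset.Icc a K).val := by
  have h1 : Finset.Icc 1 K = (Finset.Icc 1 (a - 1)).disjUnion (Finset.Icc a K)
      (by rw [Finset.disjoint_left]; intro x hx hx'
          simp only [Finset.mem_Icc] at hx hx'; omega) := by
    ext x; simp only [Finset.mem_Icc, Finset.mem_disjUnion]; omega
  rw [h1]; rfl

lemma coe_sysList_eq_pentagon (a N : ℕ) (ha : 1 ≤ a) (haN : a + 1 ≤ N) (h g : ℕ → ℤ) :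
    (↑(sysList a N (fun j => if j < a then h j else g j)) : Multiset (ℤ × ℤ)) =
      pentagonSystem a N h g := by
  rw [coe_sysList, pentagonSystem]
  congr 1
  rw [range_bind_succ_eq_Icc (N - 1) (fun j => {(lfun a j, if j < a then h j else g j),
    ((if j < a then h j else g j) + 1, (a : ℤ) + (j : ℤ))})]
  rw [Icc_val_split a (N - 1) ha (by omega), Multiset.add_bind]
  congr 1
  · refine Multiset.bind_congr (fun j hj => ?_)
    rw [Finset.mem_val, Finset.mem_Icc] at hj
    have hja : j < a := by omega
    rw [lfun, if_pos hja, if_pos hja]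
  · refine Multiset.bind_congr (fun j hj => ?_)
    rw [Finset.mem_val, Finset.mem_Icc] at hj
    have hja : ¬ (j < a) := by omega
    rw [lfun, if_neg hja, if_neg hja]

lemma filter_bind' {α β : Type*} (p : β → Prop) [DecidablePred p] (s : Multiset α)
    (F : α → Multiset β) :
    (s.bind F).filter p = s.bind fun a => (F a).filter p := by
  induction s using Multiset.induction with
  | empty => simp
  | cons ih => simp [Multiset.cons_bind, Multiset.filter_add, *]

lemma proper_sys (a N : ℕ) (ha : 1 ≤ a) (haN : a + 1 ≤ N) (e : ℕ → ℤ)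
    (he : ∀ j, 1 ≤ j → j ≤ N - 1 → (a : ℤ) ≤ e j ∧ e j ≤ (a : ℤ) + j - 1) :
    IsProperSystem ((a : ℤ) + (N : ℤ))
      (fun x => (min ((N : ℤ) - (a : ℤ) + x) ((a : ℤ) + (N : ℤ) - x)).toNat)
      ↑(sysList a N e) := by
  classical
  constructor
  · intro I hI
    rw [Multiset.mem_coe, sysList, List.mem_cons] at hI
    rcases hI with rfl | hI
    · refine ⟨by positivity, le_refl _, by push_cast; omega⟩
    · rw [List.mem_flatMap] at hI
      obtain ⟨i, hi, hmem⟩ := hI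
      rw [List.mem_range] at hi
      have hb := he (i + 1) (by omega) (by omega)
      simp only [List.mem_cons, List.not_mem_nil, or_false, List.mem_singleton] at hmem
      rcases hmem with rfl | rfl
      · rw [lfun]
        split_ifs with hja
        · refine ⟨?_, ?_, ?_⟩ <;> push_cast <;> push_cast at hb <;> omega
        · refine ⟨?_, ?_, ?_⟩ <;> push_cast <;> push_cast at hb <;> omega
      · refine ⟨?_, ?_, ?_⟩ <;> push_cast <;> push_cast at hb <;> omega
  · intro x hx0 hxm
    rw [coe_sysList, Multiset.filter_cons, filter_bind', Multiset.card_add,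
      Multiset.card_bind]
    have hmap : Multiset.map
        (Multiset.card ∘ fun i => Multiset.filter (fun I => I.1 ≤ x ∧ x ≤ I.2)
          {(lfun a (i + 1), e (i + 1)), (e (i + 1) + 1, (a : ℤ) + ((i + 1 : ℕ) : ℤ))})
        (Multiset.range (N - 1)) =
        Multiset.map (fun i => if lfun a (i + 1) ≤ x ∧ x ≤ (a : ℤ) + ((i + 1 : ℕ) : ℤ)
          then 1 else 0) (Multiset.range (N - 1)) := by
      refine Multiset.map_congr rfl (fun i hi => ?_)
      rw [Multiset.mem_range] at hi
      have hb := he (i + 1) (by omega) (by omega)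
      show (Multiset.filter _ (_ ::ₘ {_})).card = _
      rw [Multiset.filter_cons, Multiset.filter_singleton, Multiset.card_add,
        apply_ite Multiset.card, apply_ite Multiset.card]
      simp only [Multiset.card_singleton, Multiset.empty_eq_zero, Multiset.card_zero]
      rw [lfun] at *
      split_ifs <;> push_cast at * <;> omega
    rw [hmap]
    rw [← Finset.range_val]
    have hsum : (Multiset.map (fun i => if lfun a (i + 1) ≤ x ∧
          x ≤ (a : ℤ) + ((i + 1 : ℕ) : ℤ) then 1 else 0) (Finset.range (N - 1)).val).sum
        = ∑ i ∈ Finset.range (N - 1), (if lfun a (i + 1) ≤ x ∧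
          x ≤ (a : ℤ) + ((i + 1 : ℕ) : ℤ) then 1 else 0) := rfl
    rw [hsum, ← Finset.card_filter]
    have hK : Finset.filter (fun i => lfun a (i + 1) ≤ x ∧
          x ≤ (a : ℤ) + ((i + 1 : ℕ) : ℤ)) (Finset.range (N - 1))
        = Finset.Ico (((a : ℤ) - x).toNat + (x - (a : ℤ)).toNat - 1) (N - 1) := by
      ext i
      rw [Finset.mem_filter]
      simp only [Finset.mem_range, Finset.mem_Ico, lfun]
      split_ifs with hja <;> push_cast <;> omega
    rw [hK, Nat.card_Ico, apply_ite Multiset.card]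
    simp only [Multiset.card_singleton, Multiset.card_zero]
    show _ = (min ((N : ℤ) - (a : ℤ) + x) ((a : ℤ) + (N : ℤ) - x)).toNat
    rcases min_cases ((N : ℤ) - (a : ℤ) + x) ((a : ℤ) + (N : ℤ) - x) with ⟨hm, _⟩ | ⟨hm, _⟩ <;>
      rw [hm] <;> split_ifs <;> push_cast <;> omega

open SimpleGraph in
lemma connected_of_parent {V : Type*} {G : SimpleGraph V} (par : V → V) (rk : V → ℕ)
    (root : V) (H : ∀ v, v ≠ root → G.Adj v (par v) ∧ rk (par v) < rk v) :
    G.Connected := by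
  have key : ∀ k, ∀ v, rk v < k → G.Reachable root v := by
    intro k
    induction k with
    | zero => intro v hv; omega
    | succ k ih =>
      intro v hv
      by_cases hr : v = root
      · subst hr; exact Reachable.refl v
      · obtain ⟨hadj, hlt⟩ := H v hr
        exact (ih (par v) (by omega)).trans hadj.symm.reachable
  exact (SimpleGraph.connected_iff G).mpr
    ⟨fun u v => (key (rk u + 1) u (by omega)).symm.trans (key (rk v + 1) v (by omega)), ⟨root⟩⟩

open SimpleGraph in
lemma acyclic_of_parent {V : Type*} {G : SimpleGraph V} (par : V → V) (rk : V → ℕ)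
    (H : ∀ u v, G.Adj u v → (v = par u ∧ rk v < rk u) ∨ (u = par v ∧ rk u < rk v)) :
    G.IsAcyclic := by
  classical
  intro v c hc
  obtain ⟨u, hu, hmax⟩ := c.support.toFinset.exists_max_image rk
    ⟨v, List.mem_toFinset.2 c.start_mem_support⟩
  rw [List.mem_toFinset] at hu
  set c' : G.Walk u u := c.rotate u hu with hc'def
  have hc' : c'.IsCycle := hc.rotate hu
  have hmax' : ∀ x, x ∈ c'.support → rk x ≤ rk u := by
    intro x hx
    rw [c'.support_eq_cons, List.mem_cons] at hx
    rcases hx with rfl | hx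
    · exact le_refl _
    · have := (Walk.support_rotate c u hu).mem_iff.1 hx
      exact hmax x (List.mem_toFinset.2 (List.mem_of_mem_tail this))
  have hlen : 3 ≤ c'.length := hc'.three_le_length
  have hnn : ¬ c'.Nil := by rw [Walk.not_nil_iff_lt_length]; omega
  obtain ⟨w, hadj, q, hq⟩ := Walk.not_nil_iff.1 hnn
  have hnn2 : ¬ c'.reverse.Nil := by
    rw [Walk.not_nil_iff_lt_length, Walk.length_reverse]; omega
  obtain ⟨w₂, hadj₂, q₂, hq₂⟩ := Walk.not_nil_iff.1 hnn2
  have hw : w = par u := by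
    rcases H u w hadj with ⟨h1, h2⟩ | ⟨h1, h2⟩
    · exact h1
    · have : rk w ≤ rk u := by
        refine hmax' w ?_
        rw [hq, Walk.support_cons]
        exact List.mem_cons_of_mem _ q.start_mem_support
      omega
  have hw₂ : w₂ = par u := by
    rcases H u w₂ hadj₂ with ⟨h1, h2⟩ | ⟨h1, h2⟩
    · exact h1
    · have : rk w₂ ≤ rk u := by
        refine hmax' w₂ ?_
        have : w₂ ∈ c'.reverse.support := by
          rw [hq₂, Walk.support_cons]
          exact List.mem_cons_of_mem _ q₂.start_mem_support
        rwa [Walk.support_reverse, List.mem_reverse] at this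
      omega
  have hedges : c'.edges = s(u, w) :: q.edges := by rw [hq, Walk.edges_cons]
  have hww : s(u, w₂) = s(u, w) := by rw [hw, hw₂]
  have hrev : c'.edges.reverse = s(u, w) :: q₂.edges := by
    rw [← Walk.edges_reverse, hq₂, Walk.edges_cons, hww]
  have hnodup : c'.edges.Nodup := hc'.edges_nodup
  rw [hedges] at hnodup
  have hmem : s(u, w) ∈ q.edges := by
    have h1 : c'.edges = q₂.edges.reverse ++ [s(u, w)] := by
      rw [← List.reverse_reverse c'.edges, hrev]; simp
    rw [hedges] at h1
    rcases hq2r : q₂.edges.reverse with _ | ⟨z, Z⟩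
    · rw [hq2r] at h1
      simp at h1
      have : q.edges.length = 0 := by rw [Walk.length_edges]; exact Walk.nil_iff_length_eq.mp h1
      rw [Walk.length_edges] at this
      have := hq ▸ hlen
      simp [Walk.length_cons] at this
      omega
    · rw [hq2r] at h1
      simp at h1
      rw [h1.2]
      simp
  exact (List.nodup_cons.1 hnodup).1 hmem

def par (a N T : ℕ) (e : ℕ → ℤ) (ht0 : 0 < T) (hm0 : 0 < a + N) :
    Fin T ⊕ Fin (a + N) → Fin T ⊕ Fin (a + N) :=
  Sum.elim
    (fun k => Sum.inr ⟨(if k.val = 0 then a else (e ((k.val + 1) / 2)).toNat) % (a + N),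
      Nat.mod_lt _ hm0⟩)
    (fun i => if i.val = a then Sum.inr i
      else if i.val < a then Sum.inl ⟨(2 * (a - 1 - i.val) - 1) % T, Nat.mod_lt _ ht0⟩
      else Sum.inl ⟨(2 * (i.val - a)) % T, Nat.mod_lt _ ht0⟩)

def rk (a N T : ℕ) : Fin T ⊕ Fin (a + N) → ℕ :=
  Sum.elim (fun k => if k.val = 0 then 1 else if k.val % 2 = 1 then k.val + 2 else k.val - 1)
    (fun i => 2 * ((i.val - a) + (a - i.val)))

lemma admissible_sys (a N : ℕ) (ha : 1 ≤ a) (haN : a + 1 ≤ N) (e : ℕ → ℤ)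
    (he : ∀ j, 1 ≤ j → j ≤ N - 1 → (a : ℤ) ≤ e j ∧ e j ≤ (a : ℤ) + j - 1) :
    IsAdmissible (a + N) ↑(sysList a N e) := by
  classical
  refine ⟨(sysList a N e).length, (sysList a N e).get, by rw [List.ofFn_get], ?_⟩
  set T := (sysList a N e).length with hTdef
  have hT : T = 2 * N - 1 := length_sysList' a N e (by omega)
  have ht0 : 0 < T := by omega
  have hm0 : 0 < a + N := by omega
  set f : Fin T → ℤ × ℤ := (sysList a N e).get with hfdef
  set G := systemGraph (a + N) f with hG
  have hf : ∀ k : Fin T, f k = (if k.val = 0 then ((a : ℤ), (a : ℤ))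
      else if k.val % 2 = 1 then (lfun a ((k.val + 1) / 2), e ((k.val + 1) / 2))
      else (e (k.val / 2) + 1, (a : ℤ) + ((k.val / 2 : ℕ) : ℤ))) :=
    fun k => get_sysList a N e k.val k.isLt
  have adj1 : ∀ (k : Fin T) (i : Fin (a + N)),
      G.Adj (Sum.inl k) (Sum.inr i) ↔ ((f k).2 = (i : ℤ) ∨ (f k).1 = (i : ℤ) + 1) := by
    intro k i
    rw [hG]
    simp [systemGraph, SimpleGraph.fromRel_adj]
  have adjLL : ∀ (k k' : Fin T), ¬ G.Adj (Sum.inl k) (Sum.inl k') := by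
    intro k k'
    rw [hG]
    simp [systemGraph, SimpleGraph.fromRel_adj]
  have adjRR : ∀ (i i' : Fin (a + N)), ¬ G.Adj (Sum.inr i) (Sum.inr i') := by
    intro i i'
    rw [hG]
    simp [systemGraph, SimpleGraph.fromRel_adj]
  set p := par a N T e ht0 hm0 with hpdef
  set r := rk a N T with hrdef
  set root : Fin T ⊕ Fin (a + N) := Sum.inr ⟨a % (a + N), Nat.mod_lt _ hm0⟩ with hrootdef
  have hamod : a % (a + N) = a := Nat.mod_eq_of_lt (by omega)
  -- basic bounds for the generic index
  have hjb : ∀ k : Fin T, k.val ≠ 0 → 1 ≤ (k.val + 1) / 2 ∧ (k.val + 1) / 2 ≤ N - 1 := by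
    intro k hk
    have := k.isLt
    omega
  -- the key orientation lemma for inl-inr adjacencies
  have key : ∀ (k : Fin T) (i : Fin (a + N)), G.Adj (Sum.inl k) (Sum.inr i) →
      (Sum.inr i = p (Sum.inl k) ∧ r (Sum.inr i) < r (Sum.inl k)) ∨
      (Sum.inl k = p (Sum.inr i) ∧ r (Sum.inl k) < r (Sum.inr i)) := by
    intro k i hadj
    rw [adj1] at hadj
    have hiv := i.isLt
    have hkv : k.val < 2 * N - 1 := by have := k.isLt; omega
    by_cases hk0 : k.val = 0
    · rw [hf k, if_pos hk0] at hadj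
      dsimp only at hadj
      rcases hadj with h1 | h1
      · -- i = a ; parent of the root interval
        have hia : i.val = a := by omega
        left
        constructor
        · rw [hpdef, par, Sum.elim_inl]
          refine congrArg Sum.inr (Fin.ext ?_)
          simp only [Fin.val_mk, hk0, ite_true, if_true]
          omega
        · rw [hrdef, rk, Sum.elim_inl, Sum.elim_inr, if_pos hk0]
          omega
      · -- i = a - 1
        have hia : i.val = a - 1 := by omega
        right
        constructor
        · rw [hpdef, par, Sum.elim_inr, if_neg (by omega), if_pos (by omega)]
          refine congrArg Sum.inl (Fin.ext ?_)
          have h2 : 2 * (a - 1 - i.val) - 1 = 0 := by omega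
          simp only [Fin.val_mk, h2, Nat.zero_mod]
          omega
        · rw [hrdef, rk, Sum.elim_inl, Sum.elim_inr, if_pos hk0]
          omega
    · obtain ⟨hj1, hj2⟩ := hjb k hk0
      obtain ⟨hbe1, hbe2⟩ := he ((k.val + 1) / 2) hj1 hj2
      by_cases hpe : k.val % 2 = 1
      · rw [hf k, if_neg hk0, if_pos hpe] at hadj
        dsimp only at hadj
        rcases hadj with h1 | h1
        · -- second endpoint: i = e j, parent of interval k
          left
          constructor
          · rw [hpdef, par, Sum.elim_inl]
            refine congrArg Sum.inr (Fin.ext ?_)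
            simp only [Fin.val_mk, hk0, ite_false, if_false]
            rw [Nat.mod_eq_of_lt (by omega)]
            omega
          · rw [hrdef, rk, Sum.elim_inl, Sum.elim_inr, if_neg hk0, if_pos hpe]
            omega
        · -- left endpoint
          rw [lfun] at h1
          split_ifs at h1 with hja
          · -- j < a : i = a - j - 1, interval k is the parent of w_i
            right
            constructor
            · rw [hpdef, par, Sum.elim_inr, if_neg (by omega), if_pos (by omega)]
              refine congrArg Sum.inl (Fin.ext ?_)
              have h2 : 2 * (a - 1 - i.val) - 1 = k.val := by omega
              simp only [Fin.val_mk, h2, Nat.mod_eq_of_lt k.isLt]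
            · rw [hrdef, rk, Sum.elim_inl, Sum.elim_inr, if_neg hk0, if_pos hpe]
              omega
          · exfalso; omega
      · -- k even; f k = (e j + 1, a + j)
        have hj' : k.val / 2 = (k.val + 1) / 2 := by omega
        rw [hf k, if_neg hk0, if_neg hpe, hj'] at hadj
        dsimp only at hadj
        rcases hadj with h1 | h1
        · -- i = a + j : interval k is parent of w_i
          right
          constructor
          · rw [hpdef, par, Sum.elim_inr, if_neg (by omega), if_neg (by omega)]
            refine congrArg Sum.inl (Fin.ext ?_)
            have h2 : 2 * (i.val - a) = k.val := by omega
            simp only [Fin.val_mk, h2, Nat.mod_eq_of_lt k.isLt]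
          · rw [hrdef, rk, Sum.elim_inl, Sum.elim_inr, if_neg hk0, if_neg hpe]
            omega
        · -- e j = i : w_i is parent of interval k
          left
          constructor
          · rw [hpdef, par, Sum.elim_inl]
            refine congrArg Sum.inr (Fin.ext ?_)
            simp only [Fin.val_mk, hk0, ite_false, if_false]
            rw [Nat.mod_eq_of_lt (by omega)]
            omega
          · rw [hrdef, rk, Sum.elim_inl, Sum.elim_inr, if_neg hk0, if_neg hpe]
            omega
  have Hor : ∀ u v, G.Adj u v →
      (v = p u ∧ r v < r u) ∨ (u = p v ∧ r u < r v) := by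
    intro u v huv
    rcases u with k | i
    · rcases v with k' | i'
      · exact absurd huv (adjLL k k')
      · exact key k i' huv
    · rcases v with k' | i'
      · rcases key k' i (huv.symm) with ⟨h1, h2⟩ | ⟨h1, h2⟩
        · exact Or.inr ⟨h1, h2⟩
        · exact Or.inl ⟨h1, h2⟩
      · exact absurd huv (adjRR i i')
  have Hpar : ∀ v, v ≠ root → G.Adj v (p v) ∧ r (p v) < r v := by
    intro v hv
    rcases v with k | i
    · -- interval vertices
      have hkv : k.val < 2 * N - 1 := by have := k.isLt; omega
      by_cases hk0 : k.val = 0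
      · have hpv : p (Sum.inl k) = Sum.inr ⟨a, by omega⟩ := by
          rw [hpdef, par, Sum.elim_inl]
          exact congrArg Sum.inr (Fin.ext (by
            simp only [Fin.val_mk, hk0, ite_true, if_true]
            exact hamod))
        rw [hpv]
        constructor
        · rw [adj1, hf k, if_pos hk0]
          left
          dsimp only
        · simp only [hrdef, rk, Sum.elim_inl, Sum.elim_inr, Fin.val_mk]
          split_ifs <;> omega
      · obtain ⟨hj1, hj2⟩ := hjb k hk0
        obtain ⟨hbe1, hbe2⟩ := he ((k.val + 1) / 2) hj1 hj2
        have hpv : p (Sum.inl k) = Sum.inr ⟨(e ((k.val + 1) / 2)).toNat, by omega⟩ := by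
          rw [hpdef, par, Sum.elim_inl]
          refine congrArg Sum.inr (Fin.ext ?_)
          simp only [Fin.val_mk, hk0, ite_false, if_false]
          exact Nat.mod_eq_of_lt (by omega)
        rw [hpv]
        constructor
        · rw [adj1]
          by_cases hpe : k.val % 2 = 1
          · left
            rw [hf k, if_neg hk0, if_pos hpe]
            dsimp only
            rw [Int.toNat_of_nonneg (by omega)]
          · right
            have hj' : k.val / 2 = (k.val + 1) / 2 := by omega
            rw [hf k, if_neg hk0, if_neg hpe, hj']
            dsimp only
            rw [Int.toNat_of_nonneg (by omega)]
        · simp only [hrdef, rk, Sum.elim_inl, Sum.elim_inr, Fin.val_mk]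
          split_ifs <;> omega
    · -- w vertices
      have hiv := i.isLt
      have hia : i.val ≠ a := by
        intro hia
        exact hv (congrArg Sum.inr (Fin.ext (by simp only [Fin.val_mk, hamod, hia])))
      by_cases hlt : i.val < a
      · have hpv : p (Sum.inr i) = Sum.inl ⟨2 * (a - 1 - i.val) - 1, by omega⟩ := by
          rw [hpdef, par, Sum.elim_inr, if_neg hia, if_pos hlt]
          refine congrArg Sum.inl (Fin.ext ?_)
          simp only [Fin.val_mk]
          exact Nat.mod_eq_of_lt (by omega)
        rw [hpv]
        by_cases hia1 : i.val = a - 1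
        · -- parent is interval 0
          have h0 : 2 * (a - 1 - i.val) - 1 = 0 := by omega
          constructor
          · rw [G.adj_comm, adj1, hf]
            simp only [Fin.val_mk, h0, ite_true, if_true]
            right
            push_cast
            omega
          · simp only [hrdef, rk, Sum.elim_inl, Sum.elim_inr, Fin.val_mk, h0]
            split_ifs <;> omega
        · -- parent is interval 2j-1, j = a-1-i ≥ 1
          have hj1 : 1 ≤ a - 1 - i.val := by omega
          have hne0 : ¬ (2 * (a - 1 - i.val) - 1 = 0) := by omega
          have hodd : (2 * (a - 1 - i.val) - 1) % 2 = 1 := by omega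
          have hjeq : ((2 * (a - 1 - i.val) - 1) + 1) / 2 = a - 1 - i.val := by omega
          obtain ⟨hbe1, hbe2⟩ := he (a - 1 - i.val) (by omega) (by omega)
          constructor
          · rw [G.adj_comm, adj1, hf]
            simp only [Fin.val_mk, hne0, ite_false, if_false, hodd, ite_true, if_true, hjeq]
            right
            rw [lfun, if_pos (by omega)]
            push_cast
            omega
          · simp only [hrdef, rk, Sum.elim_inl, Sum.elim_inr, Fin.val_mk]
            split_ifs <;> omega
      · -- i > a
        have hgt : a < i.val := by omega
        have hjN : i.val - a ≤ N - 1 := by omega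
        have hpv : p (Sum.inr i) = Sum.inl ⟨2 * (i.val - a), by omega⟩ := by
          rw [hpdef, par, Sum.elim_inr, if_neg hia, if_neg hlt]
          refine congrArg Sum.inl (Fin.ext ?_)
          simp only [Fin.val_mk]
          exact Nat.mod_eq_of_lt (by omega)
        rw [hpv]
        have hne0 : ¬ (2 * (i.val - a) = 0) := by omega
        have heven : ¬ ((2 * (i.val - a)) % 2 = 1) := by omega
        have hjeq : (2 * (i.val - a)) / 2 = i.val - a := by omega
        obtain ⟨hbe1, hbe2⟩ := he (i.val - a) (by omega) (by omega)
        constructor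
        · rw [G.adj_comm, adj1, hf]
          simp only [Fin.val_mk, hne0, ite_false, if_false, heven, hjeq]
          left
          push_cast
          omega
        · simp only [hrdef, rk, Sum.elim_inl, Sum.elim_inr, Fin.val_mk]
          split_ifs <;> omega
  exact ⟨connected_of_parent p r root Hpar, acyclic_of_parent p r Hor⟩

lemma mem_pentagon {a N : ℕ} {h g : ℕ → ℤ} {I : ℤ × ℤ} :
    I ∈ pentagonSystem a N h g ↔
      I = ((a : ℤ), (a : ℤ)) ∨
      (∃ j, (1 ≤ j ∧ j ≤ a - 1) ∧
        (I = ((a : ℤ) - j, h j) ∨ I = (h j + 1, (a : ℤ) + j))) ∨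
      (∃ j, (a ≤ j ∧ j ≤ N - 1) ∧
        (I = ((0 : ℤ), g j) ∨ I = (g j + 1, (a : ℤ) + j))) := by
  simp only [pentagonSystem, Multiset.mem_cons, Multiset.mem_add, Multiset.mem_bind,
    Finset.mem_val, Finset.mem_Icc, Multiset.mem_singleton, Multiset.insert_eq_cons]

lemma pentagon_inj (a N : ℕ) (ha : 1 ≤ a) (h g h' g' : ℕ → ℤ)
    (Hh : ∀ j, 1 ≤ j → j ≤ a - 1 → (a : ℤ) ≤ h j ∧ h j ≤ (a : ℤ) + j - 1)
    (Hh' : ∀ j, 1 ≤ j → j ≤ a - 1 → (a : ℤ) ≤ h' j ∧ h' j ≤ (a : ℤ) + j - 1)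
    (Hg : ∀ j, a ≤ j → j ≤ N - 1 → (0 : ℤ) ≤ g j)
    (Hg' : ∀ j, a ≤ j → j ≤ N - 1 → (a : ℤ) ≤ g' j)
    (heq : pentagonSystem a N h g = pentagonSystem a N h' g') :
    (∀ j, 1 ≤ j → j ≤ a - 1 → h j = h' j) ∧
      (∀ j, a ≤ j → j ≤ N - 1 → g j = g' j) := by
  constructor
  · intro j hj1 hj2
    have hmem : ((a : ℤ) - j, h j) ∈ pentagonSystem a N h' g' := by
      rw [← heq, mem_pentagon]
      exact Or.inr (Or.inl ⟨j, ⟨hj1, hj2⟩, Or.inl rfl⟩)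
    rw [mem_pentagon] at hmem
    obtain ⟨hb1, hb2⟩ := Hh j hj1 hj2
    rcases hmem with h1 | ⟨k, ⟨hk1, hk2⟩, h1 | h1⟩ | ⟨k, ⟨hk1, hk2⟩, h1 | h1⟩ <;>
        rw [Prod.mk.injEq] at h1 <;> obtain ⟨e1, e2⟩ := h1
    · exfalso; omega
    · obtain ⟨hb1', hb2'⟩ := Hh' k hk1 hk2
      have : j = k := by omega
      subst this; exact e2
    · exfalso
      obtain ⟨hb1', hb2'⟩ := Hh' k hk1 hk2
      omega
    · exfalso; omega
    · exfalso
      have := Hg' k hk1 hk2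
      omega
  · intro j hj1 hj2
    have hmem : (g j + 1, (a : ℤ) + j) ∈ pentagonSystem a N h' g' := by
      rw [← heq, mem_pentagon]
      exact Or.inr (Or.inr ⟨j, ⟨hj1, hj2⟩, Or.inr rfl⟩)
    rw [mem_pentagon] at hmem
    have hg0 := Hg j hj1 hj2
    rcases hmem with h1 | ⟨k, ⟨hk1, hk2⟩, h1 | h1⟩ | ⟨k, ⟨hk1, hk2⟩, h1 | h1⟩ <;>
        rw [Prod.mk.injEq] at h1 <;> obtain ⟨e1, e2⟩ := h1
    · exfalso; omega
    · exfalso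
      obtain ⟨hb1', hb2'⟩ := Hh' k hk1 hk2
      omega
    · exfalso; omega
    · exfalso; omega
    · have : j = k := by omega
      subst this; omega

lemma multiset_finite (B : Finset (ℤ × ℤ)) (t : ℕ) :
    {S : Multiset (ℤ × ℤ) | Multiset.card S = t ∧ ∀ x ∈ S, x ∈ B}.Finite := by
  classical
  apply Set.Finite.subset ((t • B.val).powerset.toFinset.finite_toSet)
  intro S hS
  obtain ⟨hcard, hmem⟩ := hS
  simp only [Finset.mem_coe, Multiset.mem_toFinset, Multiset.mem_powerset]
  rw [Multiset.le_iff_count]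
  intro x
  by_cases hx : x ∈ B
  · rw [Multiset.count_nsmul]
    have h1 : Multiset.count x S ≤ t := hcard ▸ Multiset.count_le_card x S
    have h2 : 1 ≤ Multiset.count x B.val := Multiset.count_pos.2 hx
    calc Multiset.count x S ≤ t * 1 := by omega
    _ ≤ t * Multiset.count x B.val := Nat.mul_le_mul_left t h2
  · rw [Multiset.count_eq_zero_of_notMem (fun hmm => hx (hmem x hmm))]
    exact Nat.zero_le _

end Stmt8

open Stmt8 in
/-- Let `n ≥ 1` and `1 ≤ d₁ < d`; set `a = n(d - d₁)` and `m = n(2d - d₁)`.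
On the set of tuples `(h, g)` with `a ≤ h j ≤ a + j - 1` for `j ∈ {1, …, a-1}` and
`a + n⌊(j-a)/n⌋ ≤ g j ≤ a + n⌊(j-a)/n⌋ + n - 1` for `j ∈ {a, …, nd-1}`, the map
`(h, g) ↦ Λ(h, g)` is injective, and consequently the number of admissible proper systems
with parameters `m = n(2d - d₁)` and `σ(i) = min(n d₁ + i, m - i)`, consisting of exactly
`2nd - 1` intervals, is at least `(a - 1)! · n^(n d₁)`. -/
theorem statement8 (n d d₁ : ℕ) (hn : 1 ≤ n) (hd₁ : 1 ≤ d₁) (hd : d₁ < d) :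
    (∀ h g h' g' : ℕ → ℤ,
      (∀ j : ℕ, 1 ≤ j → j ≤ n * (d - d₁) - 1 →
        (n * (d - d₁) : ℤ) ≤ h j ∧ h j ≤ (n * (d - d₁) : ℤ) + j - 1) →
      (∀ j : ℕ, n * (d - d₁) ≤ j → j ≤ n * d - 1 →
        (n * (d - d₁) + n * ((j - n * (d - d₁)) / n) : ℤ) ≤ g j ∧
          g j ≤ (n * (d - d₁) + n * ((j - n * (d - d₁)) / n) : ℤ) + n - 1) →
      (∀ j : ℕ, 1 ≤ j → j ≤ n * (d - d₁) - 1 →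
        (n * (d - d₁) : ℤ) ≤ h' j ∧ h' j ≤ (n * (d - d₁) : ℤ) + j - 1) →
      (∀ j : ℕ, n * (d - d₁) ≤ j → j ≤ n * d - 1 →
        (n * (d - d₁) + n * ((j - n * (d - d₁)) / n) : ℤ) ≤ g' j ∧
          g' j ≤ (n * (d - d₁) + n * ((j - n * (d - d₁)) / n) : ℤ) + n - 1) →
      pentagonSystem (n * (d - d₁)) (n * d) h g =
        pentagonSystem (n * (d - d₁)) (n * d) h' g' →
      (∀ j : ℕ, 1 ≤ j → j ≤ n * (d - d₁) - 1 → h j = h' j) ∧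
        (∀ j : ℕ, n * (d - d₁) ≤ j → j ≤ n * d - 1 → g j = g' j)) ∧
    Nat.factorial (n * (d - d₁) - 1) * n ^ (n * d₁) ≤
      Set.ncard {S : Multiset (ℤ × ℤ) |
        IsProperSystem (n * (2 * d - d₁))
          (fun i : ℤ => (min ((n : ℤ) * d₁ + i) ((n * (2 * d - d₁) : ℕ) - i)).toNat) S ∧
        IsAdmissible (n * (2 * d - d₁)) S ∧
        S.card = 2 * (n * d) - 1} := by
  classical
  have hdd : d₁ ≤ d := le_of_lt hd
  set a := n * (d - d₁) with hadef
  set N := n * d with hNdef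
  have hsub : a = n * d - n * d₁ := Nat.mul_sub n d d₁
  have hd1N : n * d₁ ≤ n * d := Nat.mul_le_mul_left n hdd
  have hd1pos : 1 ≤ n * d₁ := by
    calc 1 = 1 * 1 := rfl
    _ ≤ n * d₁ := Nat.mul_le_mul hn hd₁
  have ha1 : 1 ≤ a := by
    calc 1 = 1 * 1 := rfl
    _ ≤ n * (d - d₁) := Nat.mul_le_mul hn (by omega)
  have hna : n ≤ a := by
    calc n = n * 1 := (Nat.mul_one n).symm
    _ ≤ n * (d - d₁) := Nat.mul_le_mul_left n (by omega)
  have hNa : a ≤ N := by omega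
  have hNaeq : N - a = n * d₁ := by omega
  have haN : a + 1 ≤ N := by omega
  have hmnat : n * (2 * d - d₁) = a + N := by
    have h1 : n * (2 * d - d₁) = n * (2 * d) - n * d₁ := Nat.mul_sub n (2 * d) d₁
    have h2 : n * (2 * d) = 2 * (n * d) := by ring
    omega
  have hcast1 : ((a : ℕ) : ℤ) = (n : ℤ) * ((d : ℤ) - (d₁ : ℤ)) := by
    rw [hadef, Nat.cast_mul, Nat.cast_sub hdd]
  have hcast2 : ((N : ℕ) : ℤ) = (n : ℤ) * (d : ℤ) := by rw [hNdef, Nat.cast_mul]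
  have hcastm : ((n * (2 * d - d₁) : ℕ) : ℤ) = (a : ℤ) + (N : ℤ) := by
    rw [hmnat]; push_cast; ring
  have hcastm2 : (n : ℤ) * (2 * (d : ℤ) - (d₁ : ℤ)) = (a : ℤ) + (N : ℤ) := by
    rw [← hcastm, Nat.cast_mul, Nat.cast_sub (show d₁ ≤ 2 * d by omega)]
    push_cast; ring
  have hcastd1 : (n : ℤ) * (d₁ : ℤ) = (N : ℤ) - (a : ℤ) := by
    have h3 : ((n * d₁ : ℕ) : ℤ) = ((N - a : ℕ) : ℤ) := by rw [hNaeq]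
    rw [Nat.cast_sub hNa] at h3
    push_cast at h3
    linarith
  have hn0 : (0 : ℤ) < (n : ℤ) := by exact_mod_cast hn
  -- conversion of the window bounds
  have hgwin : ∀ (g : ℕ → ℤ), (∀ j : ℕ, a ≤ j → j ≤ N - 1 →
        (n * (d - d₁) + n * ((j - n * (d - d₁)) / n) : ℤ) ≤ g j ∧
          g j ≤ (n * (d - d₁) + n * ((j - n * (d - d₁)) / n) : ℤ) + n - 1) →
      ∀ j : ℕ, a ≤ j → j ≤ N - 1 → (a : ℤ) ≤ g j ∧ g j ≤ (j : ℤ) + (n : ℤ) - 1 := by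
    intro g hg j hj1 hj2
    obtain ⟨l1, l2⟩ := hg j hj1 hj2
    have hja : (a : ℤ) ≤ (j : ℤ) := by exact_mod_cast hj1
    have hx : (0 : ℤ) ≤ (j : ℤ) - (n : ℤ) * ((d : ℤ) - (d₁ : ℤ)) := by linarith [hcast1]
    have hA0 : (0 : ℤ) ≤ (n : ℤ) * (((j : ℤ) - (n : ℤ) * ((d : ℤ) - (d₁ : ℤ))) / (n : ℤ)) :=
      mul_nonneg (by positivity) (Int.ediv_nonneg hx (by positivity))
    have hAx : (n : ℤ) * (((j : ℤ) - (n : ℤ) * ((d : ℤ) - (d₁ : ℤ))) / (n : ℤ)) ≤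
        (j : ℤ) - (n : ℤ) * ((d : ℤ) - (d₁ : ℤ)) := by
      have e1 := Int.mul_ediv_add_emod ((j : ℤ) - (n : ℤ) * ((d : ℤ) - (d₁ : ℤ))) (n : ℤ)
      have e2 := Int.emod_nonneg ((j : ℤ) - (n : ℤ) * ((d : ℤ) - (d₁ : ℤ)))
        (show (n : ℤ) ≠ 0 by positivity)
      linarith
    constructor
    · linarith [hcast1]
    · linarith [hcast1]
  constructor
  · -- injectivity
    intro h g h' g' Hh Hg Hh' Hg' heq
    have Hh2 : ∀ j, 1 ≤ j → j ≤ a - 1 → (a : ℤ) ≤ h j ∧ h j ≤ (a : ℤ) + j - 1 := by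
      intro j hj1 hj2
      obtain ⟨l1, l2⟩ := Hh j hj1 hj2
      constructor <;> linarith [hcast1]
    have Hh'2 : ∀ j, 1 ≤ j → j ≤ a - 1 → (a : ℤ) ≤ h' j ∧ h' j ≤ (a : ℤ) + j - 1 := by
      intro j hj1 hj2
      obtain ⟨l1, l2⟩ := Hh' j hj1 hj2
      constructor <;> linarith [hcast1]
    have Hg2 : ∀ j, a ≤ j → j ≤ N - 1 → (0 : ℤ) ≤ g j := by
      intro j hj1 hj2
      have h1 := (hgwin g Hg j hj1 hj2).1
      have ha0 : (0 : ℤ) ≤ (a : ℤ) := by positivity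
      linarith
    have Hg'2 : ∀ j, a ≤ j → j ≤ N - 1 → (a : ℤ) ≤ g' j := fun j hj1 hj2 =>
      (hgwin g' Hg' j hj1 hj2).1
    exact pentagon_inj a N ha1 h g h' g' Hh2 Hh'2 Hg2 Hg'2 heq
  · -- counting
    set W' : ℕ → Finset ℤ := fun j =>
      if j = 0 then {0}
      else if j < a then Finset.Icc (a : ℤ) ((a : ℤ) + (j : ℤ) - 1)
      else Finset.Icc ((n : ℤ) * ((d : ℤ) - (d₁ : ℤ)) +
          (n : ℤ) * (((j : ℤ) - (n : ℤ) * ((d : ℤ) - (d₁ : ℤ))) / (n : ℤ)))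
        ((n : ℤ) * ((d : ℤ) - (d₁ : ℤ)) +
          (n : ℤ) * (((j : ℤ) - (n : ℤ) * ((d : ℤ) - (d₁ : ℤ))) / (n : ℤ)) + (n : ℤ) - 1)
      with hW'def
    set ext : (Fin N → ℤ) → ℕ → ℤ := fun v j => if hj : j < N then v ⟨j, hj⟩ else 0
      with hextdef
    set Φ : (Fin N → ℤ) → Multiset (ℤ × ℤ) := fun v => pentagonSystem a N (ext v) (ext v)
      with hPhidef
    set P : Finset (Fin N → ℤ) := Fintype.piFinset (fun j : Fin N => W' j.val) with hPdef
    have hextv : ∀ (v : Fin N → ℤ) (j : ℕ) (hj : j < N), ext v j = v ⟨j, hj⟩ := by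
      intro v j hj
      simp only [hextdef]
      rw [dif_pos hj]
    have hPmem : ∀ v ∈ P, ∀ j : Fin N, v j ∈ W' j.val := by
      intro v hv j
      exact Fintype.mem_piFinset.1 hv j
    have hPbound : ∀ v ∈ P, ∀ j, 1 ≤ j → j ≤ N - 1 →
        (a : ℤ) ≤ ext v j ∧ ext v j ≤ (a : ℤ) + (j : ℤ) - 1 := by
      intro v hv j hj1 hj2
      have hjN : j < N := by omega
      have hvj := hPmem v hv ⟨j, hjN⟩
      rw [hextv v j hjN]
      simp only [hW'def] at hvj
      rw [if_neg (by simpa using (by omega : ¬ j = 0))] at hvj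
      by_cases hja : j < a
      · rw [if_pos (by simpa using hja), Finset.mem_Icc] at hvj
        exact hvj
      · rw [if_neg (by simpa using hja), Finset.mem_Icc] at hvj
        have hja' : a ≤ j := by omega
        have hjaz : (a : ℤ) ≤ (j : ℤ) := by exact_mod_cast hja'
        have hx : (0 : ℤ) ≤ (j : ℤ) - (n : ℤ) * ((d : ℤ) - (d₁ : ℤ)) := by linarith [hcast1]
        have hA0 : (0 : ℤ) ≤ (n : ℤ) * (((j : ℤ) - (n : ℤ) * ((d : ℤ) - (d₁ : ℤ))) / (n : ℤ)) :=
          mul_nonneg (by positivity) (Int.ediv_nonneg hx (by positivity))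
        have hAx : (n : ℤ) * (((j : ℤ) - (n : ℤ) * ((d : ℤ) - (d₁ : ℤ))) / (n : ℤ)) ≤
            (j : ℤ) - (n : ℤ) * ((d : ℤ) - (d₁ : ℤ)) := by
          have e1 := Int.mul_ediv_add_emod ((j : ℤ) - (n : ℤ) * ((d : ℤ) - (d₁ : ℤ))) (n : ℤ)
          have e2 := Int.emod_nonneg ((j : ℤ) - (n : ℤ) * ((d : ℤ) - (d₁ : ℤ)))
            (show (n : ℤ) ≠ 0 by positivity)
          linarith
        have hnaz : (n : ℤ) ≤ (a : ℤ) := by exact_mod_cast hna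
        constructor
        · linarith [hcast1, hvj.1]
        · linarith [hcast1, hvj.2]
    have hsys : ∀ v : Fin N → ℤ, (↑(sysList a N (ext v)) : Multiset (ℤ × ℤ)) = Φ v := by
      intro v
      have h6 := coe_sysList_eq_pentagon a N ha1 haN (ext v) (ext v)
      have h7 : (fun j => if j < a then ext v j else ext v j) = ext v :=
        funext fun j => ite_self _
      rw [h7] at h6
      rw [hPhidef]
      exact h6
    have hσ : (fun i : ℤ => (min ((n : ℤ) * d₁ + i) (((n * (2 * d - d₁) : ℕ) : ℤ) - i)).toNat)
        = (fun x : ℤ => (min ((N : ℤ) - (a : ℤ) + x) ((a : ℤ) + (N : ℤ) - x)).toNat) := by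
      funext i
      rw [hcastd1, hcastm]
    -- cardinality of the parameter space
    have hIcc : ∀ lo : ℤ, (Finset.Icc lo (lo + (n : ℤ) - 1)).card = n := by
      intro lo
      rw [Int.card_Icc, show lo + (n : ℤ) - 1 + 1 - lo = (n : ℤ) by ring, Int.toNat_natCast]
    have hW'card : ∀ j : ℕ, (W' j).card = (if j = 0 then 1 else if j < a then j else n) := by
      intro j
      simp only [hW'def]
      split_ifs with h1 h2
      · simp
      · rw [Int.card_Icc]; omega
      · exact hIcc _
    have hprod : ∏ j : Fin N, (W' j.val).card = Nat.factorial (a - 1) * n ^ (n * d₁) := by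
      rw [Fin.prod_univ_eq_prod_range (fun j => (W' j).card) N]
      rw [Finset.prod_congr rfl (fun j _ => hW'card j)]
      rw [← Finset.prod_range_mul_prod_Ico _ hNa]
      congr 1
      · rw [show Finset.range a = Finset.range ((a - 1) + 1) by rw [Nat.sub_add_cancel ha1]]
        rw [Finset.prod_range_succ']
        have h8 : ∀ i ∈ Finset.range (a - 1),
            (if i + 1 = 0 then 1 else if i + 1 < a then i + 1 else n) = i + 1 := by
          intro i hi
          rw [Finset.mem_range] at hi
          rw [if_neg (by omega), if_pos (by omega)]
        rw [Finset.prod_congr rfl h8, Finset.prod_range_add_one_eq_factorial]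
        simp
      · have h9 : ∀ j ∈ Finset.Ico a N,
            (if j = 0 then 1 else if j < a then j else n) = n := by
          intro j hj
          rw [Finset.mem_Ico] at hj
          rw [if_neg (by omega), if_neg (by omega)]
        rw [Finset.prod_congr rfl h9, Finset.prod_const, Nat.card_Ico, hNaeq]
    -- injectivity of Φ on P
    have hinj : Set.InjOn Φ ↑P := by
      intro v hv v' hv' heq
      rw [Finset.mem_coe] at hv hv'
      simp only [hPhidef] at heq
      have Hg0 : ∀ j, a ≤ j → j ≤ N - 1 → (0 : ℤ) ≤ ext v j := by
        intro j h1 h2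
        have := (hPbound v hv j (by omega) h2).1
        have ha0 : (0 : ℤ) ≤ (a : ℤ) := by positivity
        linarith
      have Hga : ∀ j, a ≤ j → j ≤ N - 1 → (a : ℤ) ≤ ext v' j := fun j h1 h2 =>
        (hPbound v' hv' j (by omega) h2).1
      obtain ⟨ih, ig⟩ := pentagon_inj a N ha1 (ext v) (ext v) (ext v') (ext v')
        (fun j h1 h2 => hPbound v hv j h1 (by omega))
        (fun j h1 h2 => hPbound v' hv' j h1 (by omega)) Hg0 Hga heq
      funext j
      by_cases hj0 : j.val = 0
      · have h1 := hPmem v hv j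
        have h2 := hPmem v' hv' j
        simp only [hW'def, hj0, if_pos rfl, Finset.mem_singleton] at h1 h2
        rw [h1, h2]
      · have hjlt := j.isLt
        by_cases hja : j.val < a
        · have h3 := ih j.val (by omega) (by omega)
          rw [hextv v j.val j.isLt, hextv v' j.val j.isLt] at h3
          exact h3
        · have h3 := ig j.val (by omega) (by omega)
          rw [hextv v j.val j.isLt, hextv v' j.val j.isLt] at h3
          exact h3
    -- finiteness of the target set
    have hfin : {S : Multiset (ℤ × ℤ) |
        IsProperSystem (n * (2 * d - d₁))
          (fun i : ℤ => (min ((n : ℤ) * d₁ + i) ((n * (2 * d - d₁) : ℕ) - i)).toNat) S ∧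
        IsAdmissible (n * (2 * d - d₁)) S ∧
        Multiset.card S = 2 * N - 1}.Finite := by
      apply Set.Finite.subset (multiset_finite
        (Finset.Icc (0 : ℤ) ((a : ℤ) + N) ×ˢ Finset.Icc (0 : ℤ) ((a : ℤ) + N)) (2 * N - 1))
      intro S hS
      obtain ⟨h1, h2, h3⟩ := hS
      refine ⟨h3, fun x hx => ?_⟩
      have h4 := h1.1 x hx
      rw [Finset.mem_product]
      constructor <;> rw [Finset.mem_Icc] <;> constructor <;> linarith [hcastm2, h4.1, h4.2.1, h4.2.2]
    -- membership of the image
    have hsubset : ↑(Finset.image Φ P) ⊆ {S : Multiset (ℤ × ℤ) |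
        IsProperSystem (n * (2 * d - d₁))
          (fun i : ℤ => (min ((n : ℤ) * d₁ + i) ((n * (2 * d - d₁) : ℕ) - i)).toNat) S ∧
        IsAdmissible (n * (2 * d - d₁)) S ∧
        Multiset.card S = 2 * N - 1} := by
      intro S hS
      rw [Finset.coe_image] at hS
      obtain ⟨v, hv, rfl⟩ := hS
      have hb := hPbound v hv
      refine ⟨?_, ?_, ?_⟩
      · rw [hcastm2, hσ, ← hsys v]
        exact proper_sys a N ha1 haN (ext v) hb
      · rw [hmnat, ← hsys v]
        exact admissible_sys a N ha1 haN (ext v) hb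
      · rw [← hsys v, Multiset.coe_card, length_sysList' a N (ext v) (by omega)]
    calc Nat.factorial (a - 1) * n ^ (n * d₁)
        = P.card := by rw [hPdef, Fintype.card_piFinset]; exact hprod.symm
      _ = (Finset.image Φ P).card := (Finset.card_image_of_injOn hinj).symm
      _ = (↑(Finset.image Φ P) : Set (Multiset (ℤ × ℤ))).ncard :=
          (Set.ncard_coe_finset _).symm
      _ ≤ _ := Set.ncard_le_ncard hsubset hfin
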